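/- Let Φ be a finite pseudo-root system with positive system Φ⁺, and consider a dihedral (rank 2) situation or, in general, a normalized pseudo-root system Φ. Let θ = (α₁,…,α_r) be a sequence of pairwise orthogonal unit pseudo-roots with no pseudo-root of Φ orthogonal to all of them, and let θ' be obtained from θ by exchanging α_i and α_{i+1}. Let Φ' = Φ ∩ (ℝα_i + ℝα_{i+1}); then Φ' is of type A₁×A₁ or I₂(m) with m even, m ≥ 4, and the cardinality of Φ⁺_θ ∩ Φ⁻_{θ'} is even if Φ' = A₁×A₁, and is congruent to m/2 − 1 modulo 2 if Φ' = I₂(m). -/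

import Mathlib

open scoped InnerProductSpace Pointwise

/-- `β` is lexicographically positive with respect to the sequence `θ`. -/
def lexPos {V : Type*} [NormedAddCommGroup V] [InnerProductSpace ℝ V]
    {r : ℕ} (θ : Fin r → V) (β : V) : Prop :=
  ∃ k, 0 < ⟪θ k, β⟫_ℝ ∧ ∀ j, j < k → ⟪θ j, β⟫_ℝ = 0

/-- The system of positive pseudo-roots `Φ⁺_θ` determined lexicographically by `θ`. -/
def PhiPlusSeq {V : Type*} [NormedAddCommGroup V] [InnerProductSpace ℝ V]
    (Φ : Set V) {r : ℕ} (θ : Fin r → V) : Set V :=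
  {β ∈ Φ | lexPos θ β}

/-- Parity of a finset is determined by the fixed points of any involution on it. -/
lemma card_mod_two_eq_card_filter_fixed {α : Type*} [DecidableEq α] (f : α → α) :
    ∀ s : Finset α, (∀ a ∈ s, f a ∈ s) → (∀ a ∈ s, f (f a) = a) →
      s.card % 2 = (s.filter fun a => f a = a).card % 2 := by
  intro s
  induction s using Finset.strongInductionOn with
  | _ s ih =>
    intro hmem hinv
    by_cases hfix : ∀ a ∈ s, f a = a
    · rw [Finset.filter_true_of_mem hfix]
    · push_neg at hfix
      obtain ⟨a, ha, hfa⟩ := hfix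
      have hfa_mem : f a ∈ s := hmem a ha
      set s' := (s.erase a).erase (f a) with hs'
      have hfa_mem' : f a ∈ s.erase a := Finset.mem_erase.2 ⟨hfa, hfa_mem⟩
      have hsub : s' ⊂ s :=
        lt_of_le_of_lt (Finset.erase_subset _ _) (Finset.erase_ssubset ha)
      have hcard : s.card = s'.card + 2 := by
        rw [hs', Finset.card_erase_of_mem hfa_mem', Finset.card_erase_of_mem ha]
        have : 2 ≤ s.card := Finset.one_lt_card.2 ⟨a, ha, f a, hfa_mem, fun h => hfa h.symm⟩
        omega
      have hmem' : ∀ b ∈ s', f b ∈ s' := by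
        intro b hb
        rw [hs', Finset.mem_erase, Finset.mem_erase] at hb ⊢
        refine ⟨fun h => hb.2.1 ?_, fun h => hb.1 ?_, hmem b hb.2.2⟩
        · rw [← hinv b hb.2.2, h, hinv a ha]
        · rw [← hinv b hb.2.2, h]
      have hinv' : ∀ b ∈ s', f (f b) = b := fun b hb =>
        hinv b (Finset.mem_erase.1 (Finset.mem_erase.1 hb).2).2
      have hfilter : s.filter (fun a => f a = a) = s'.filter fun a => f a = a := by
        rw [hs', Finset.filter_erase, Finset.filter_erase]
        rw [Finset.erase_eq_of_notMem, Finset.erase_eq_of_notMem]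
        · simp only [Finset.mem_filter]
          exact fun h => hfa h.2
        · simp only [Finset.mem_filter, Finset.mem_erase]
          rintro ⟨-, h⟩
          exact hfa (by rw [← hinv a ha, h.2, h.2])
      rw [hfilter, hcard, ← ih s' hsub hmem' hinv']
      omega

/-- let `Φ` be a normalized pseudo-root system, let
`θ = (α₁, …, α_r)` be a sequence of pairwise orthogonal elements of `Φ` with no
pseudo-root orthogonal to all of them, and let `θ'` be obtained from `θ` by
swapping the `i`-th and `(i+1)`-st entries.  Then
`Φ' = Φ ∩ (ℝ αᵢ + ℝ α_{i+1})` is a (rank two) pseudo-root system with `2m`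
elements for some even `m ≥ 2` (type `A₁ × A₁` when `m = 2` and `I₂(m)` with `m`
even, `m ≥ 4`, otherwise), and `|Φ⁺_θ ∩ Φ⁻_{θ'}| ≡ m/2 − 1 (mod 2)`; in
particular it is even in the `A₁ × A₁` case. -/
theorem stmt_12 {V : Type*} [NormedAddCommGroup V] [InnerProductSpace ℝ V]
    [FiniteDimensional ℝ V]
    (Φ : Set V) (hfin : Φ.Finite)
    (hunit : ∀ α ∈ Φ, ‖α‖ = 1)
    (hred : ∀ α ∈ Φ, ∀ c : ℝ, c • α ∈ Φ → c = 1 ∨ c = -1)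
    (hrefl : ∀ α ∈ Φ, ∀ β ∈ Φ, β - (2 * ⟪α, β⟫_ℝ) • α ∈ Φ)
    {r : ℕ} (θ : Fin r → V)
    (hθΦ : ∀ k, θ k ∈ Φ)
    (horth : ∀ k l, k ≠ l → ⟪θ k, θ l⟫_ℝ = 0)
    (hfull : ∀ β ∈ Φ, ∃ k, ⟪θ k, β⟫_ℝ ≠ 0)
    (i j : Fin r) (hij : (j : ℕ) = (i : ℕ) + 1) :
    ∃ m : ℕ, Even m ∧ 2 ≤ m ∧
      (Φ ∩ (Submodule.span ℝ {θ i, θ j} : Set V)).ncard = 2 * m ∧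
      (PhiPlusSeq Φ θ ∩ (-(PhiPlusSeq Φ (θ ∘ Equiv.swap i j)))).ncard % 2
        = (m / 2 - 1) % 2 := by
  classical
  have hiv : (i : ℕ) < (j : ℕ) := by omega
  have hij' : i ≠ j := by
    intro h; rw [h] at hiv; omega
  have h11 : ⟪θ i, θ i⟫_ℝ = 1 := by
    rw [real_inner_self_eq_norm_mul_norm, hunit _ (hθΦ i)]; norm_num
  have h22 : ⟪θ j, θ j⟫_ℝ = 1 := by
    rw [real_inner_self_eq_norm_mul_norm, hunit _ (hθΦ j)]; norm_num
  have h12 : ⟪θ i, θ j⟫_ℝ = 0 := horth i j hij'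
  have h21 : ⟪θ j, θ i⟫_ℝ = 0 := horth j i (Ne.symm hij')
  have hneg : ∀ β ∈ Φ, -β ∈ Φ := by
    intro β hβ
    have h := hrefl β hβ β hβ
    have hb : ⟪β, β⟫_ℝ = 1 := by
      rw [real_inner_self_eq_norm_mul_norm, hunit β hβ]; norm_num
    rw [hb] at h
    have : β - (2 * 1 : ℝ) • β = -β := by module
    rwa [this] at h
  set P := (Submodule.span ℝ ({θ i, θ j} : Set V)) with hPdef
  have he1P : θ i ∈ P := Submodule.subset_span (by simp)
  have he2P : θ j ∈ P := Submodule.subset_span (by simp)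
  have hspan : ∀ β ∈ P, β = ⟪θ i, β⟫_ℝ • θ i + ⟪θ j, β⟫_ℝ • θ j := by
    intro β hβ
    obtain ⟨c, d, rfl⟩ := Submodule.mem_span_pair.1 hβ
    simp [inner_add_right, real_inner_smul_right, h11, h22, h12, h21, hunit _ (hθΦ i), hunit _ (hθΦ j)]
  have hperp : ∀ k : Fin r, k ≠ i → k ≠ j → ∀ β ∈ P, ⟪θ k, β⟫_ℝ = 0 := by
    intro k hki hkj β hβ
    obtain ⟨c, d, rfl⟩ := Submodule.mem_span_pair.1 hβ
    simp [inner_add_right, real_inner_smul_right, horth k i hki, horth k j hkj]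
  -- the finset of roots in the plane
  have hT : (Φ ∩ (P : Set V)).Finite := hfin.inter_of_left _
  set FT := hT.toFinset with hFTdef
  have hFT : ∀ β, β ∈ FT ↔ β ∈ Φ ∧ β ∈ P := by
    intro β
    rw [hFTdef, Set.Finite.mem_toFinset]
    exact Iff.rfl
  -- reflections along the two coordinates
  set g1 : V → V := fun β => β - (2 * ⟪θ i, β⟫_ℝ) • θ i with hg1def
  set g2 : V → V := fun β => β - (2 * ⟪θ j, β⟫_ℝ) • θ j with hg2def
  have hg1a : ∀ β, ⟪θ i, g1 β⟫_ℝ = -⟪θ i, β⟫_ℝ := by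
    intro β
    simp only [hg1def, inner_sub_right, real_inner_smul_right, h11]
    ring
  have hg1b : ∀ β, ⟪θ j, g1 β⟫_ℝ = ⟪θ j, β⟫_ℝ := by
    intro β
    simp only [hg1def, inner_sub_right, real_inner_smul_right, h21]
    ring
  have hg2a : ∀ β, ⟪θ i, g2 β⟫_ℝ = ⟪θ i, β⟫_ℝ := by
    intro β
    simp only [hg2def, inner_sub_right, real_inner_smul_right, h12]
    ring
  have hg2b : ∀ β, ⟪θ j, g2 β⟫_ℝ = -⟪θ j, β⟫_ℝ := by
    intro β
    simp only [hg2def, inner_sub_right, real_inner_smul_right, h22]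
    ring
  have hg1inv : ∀ β, g1 (g1 β) = β := by
    intro β
    have h := hg1a β
    simp only [hg1def] at h ⊢
    rw [h]
    module
  have hg2inv : ∀ β, g2 (g2 β) = β := by
    intro β
    have h := hg2b β
    simp only [hg2def] at h ⊢
    rw [h]
    module
  have hg1FT : ∀ β ∈ FT, g1 β ∈ FT := by
    intro β hβ
    rw [hFT] at hβ ⊢
    exact ⟨hrefl _ (hθΦ i) _ hβ.1,
      Submodule.sub_mem _ hβ.2 (Submodule.smul_mem _ _ he1P)⟩
  have hg2FT : ∀ β ∈ FT, g2 β ∈ FT := by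
    intro β hβ
    rw [hFT] at hβ ⊢
    exact ⟨hrefl _ (hθΦ j) _ hβ.1,
      Submodule.sub_mem _ hβ.2 (Submodule.smul_mem _ _ he2P)⟩
  -- quadrants
  set Qpp := FT.filter (fun β => 0 < ⟪θ i, β⟫_ℝ ∧ 0 < ⟪θ j, β⟫_ℝ) with hQppdef
  set Qpm := FT.filter (fun β => 0 < ⟪θ i, β⟫_ℝ ∧ ⟪θ j, β⟫_ℝ < 0) with hQpmdef
  set Qmp := FT.filter (fun β => ⟪θ i, β⟫_ℝ < 0 ∧ 0 < ⟪θ j, β⟫_ℝ) with hQmpdef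
  set Qmm := FT.filter (fun β => ⟪θ i, β⟫_ℝ < 0 ∧ ⟪θ j, β⟫_ℝ < 0) with hQmmdef
  set Ax := FT.filter (fun β => ⟪θ i, β⟫_ℝ = 0 ∨ ⟪θ j, β⟫_ℝ = 0) with hAxdef
  set q := Qpm.card with hqdef
  have hcard_pp : Qpp.card = Qpm.card := by
    refine Finset.card_nbij' g2 g2 ?_ ?_ (fun β _ => hg2inv β) (fun β _ => hg2inv β)
    · intro β hβ
      rw [hQppdef, Finset.mem_coe, Finset.mem_filter] at hβ
      rw [hQpmdef, Finset.mem_coe, Finset.mem_filter, hg2a, hg2b]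
      exact ⟨hg2FT β hβ.1, hβ.2.1, by linarith [hβ.2.2]⟩
    · intro β hβ
      rw [hQpmdef, Finset.mem_coe, Finset.mem_filter] at hβ
      rw [hQppdef, Finset.mem_coe, Finset.mem_filter, hg2a, hg2b]
      exact ⟨hg2FT β hβ.1, hβ.2.1, by linarith [hβ.2.2]⟩
  have hcard_mm : Qmm.card = Qmp.card := by
    refine Finset.card_nbij' g2 g2 ?_ ?_ (fun β _ => hg2inv β) (fun β _ => hg2inv β)
    · intro β hβ
      rw [hQmmdef, Finset.mem_coe, Finset.mem_filter] at hβ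
      rw [hQmpdef, Finset.mem_coe, Finset.mem_filter, hg2a, hg2b]
      exact ⟨hg2FT β hβ.1, hβ.2.1, by linarith [hβ.2.2]⟩
    · intro β hβ
      rw [hQmpdef, Finset.mem_coe, Finset.mem_filter] at hβ
      rw [hQmmdef, Finset.mem_coe, Finset.mem_filter, hg2a, hg2b]
      exact ⟨hg2FT β hβ.1, hβ.2.1, by linarith [hβ.2.2]⟩
  have hcard_mp : Qmp.card = Qpp.card := by
    refine Finset.card_nbij' g1 g1 ?_ ?_ (fun β _ => hg1inv β) (fun β _ => hg1inv β)
    · intro β hβ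
      rw [hQmpdef, Finset.mem_coe, Finset.mem_filter] at hβ
      rw [hQppdef, Finset.mem_coe, Finset.mem_filter, hg1a, hg1b]
      exact ⟨hg1FT β hβ.1, by linarith [hβ.2.1], hβ.2.2⟩
    · intro β hβ
      rw [hQppdef, Finset.mem_coe, Finset.mem_filter] at hβ
      rw [hQmpdef, Finset.mem_coe, Finset.mem_filter, hg1a, hg1b]
      exact ⟨hg1FT β hβ.1, by linarith [hβ.2.1], hβ.2.2⟩
  -- the axes
  have hne0i : θ i ≠ 0 := by
    intro h; rw [h, inner_zero_right] at h11; norm_num at h11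
  have hne0j : θ j ≠ 0 := by
    intro h; rw [h, inner_zero_right] at h22; norm_num at h22
  have hne1 : θ i ≠ -θ i := by
    intro h
    apply hne0i
    have h2 : (2 : ℝ) • θ i = 0 := by
      rw [two_smul]
      nth_rewrite 2 [h]
      simp
    exact (smul_eq_zero.1 h2).resolve_left two_ne_zero
  have hne2 : θ j ≠ -θ j := by
    intro h
    apply hne0j
    have h2 : (2 : ℝ) • θ j = 0 := by
      rw [two_smul]
      nth_rewrite 2 [h]
      simp
    exact (smul_eq_zero.1 h2).resolve_left two_ne_zero
  have hneij : θ i ≠ θ j := by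
    intro h; rw [h, h22] at h12; norm_num at h12
  have hneij' : θ i ≠ -θ j := by
    intro h; rw [h, inner_neg_right, h22] at h21; norm_num at h21
  have hneij'' : -θ i ≠ θ j := by
    intro h; rw [← h, inner_neg_right, h11] at h12; norm_num at h12
  have hneij''' : -θ i ≠ -θ j := by
    intro h; exact hneij (neg_injective h)
  have hAx : Ax = ({θ i, -θ i, θ j, -θ j} : Finset V) := by
    ext β
    rw [hAxdef, Finset.mem_filter, hFT]
    simp only [Finset.mem_insert, Finset.mem_singleton]
    constructor
    · rintro ⟨⟨hβΦ, hβP⟩, hax⟩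
      have hd := hspan β hβP
      rcases hax with ha | hb
      · rw [ha, zero_smul, zero_add] at hd
        rcases hred (θ j) (hθΦ j) _ (hd ▸ hβΦ) with h1 | h1
        · rw [h1, one_smul] at hd; tauto
        · rw [h1, neg_one_smul] at hd; tauto
      · rw [hb, zero_smul, add_zero] at hd
        rcases hred (θ i) (hθΦ i) _ (hd ▸ hβΦ) with h1 | h1
        · rw [h1, one_smul] at hd; tauto
        · rw [h1, neg_one_smul] at hd; tauto
    · rintro (rfl | rfl | rfl | rfl)
      · exact ⟨⟨hθΦ i, he1P⟩, Or.inr h21⟩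
      · exact ⟨⟨hneg _ (hθΦ i), Submodule.neg_mem _ he1P⟩,
          Or.inr (by rw [inner_neg_right, h21, neg_zero])⟩
      · exact ⟨⟨hθΦ j, he2P⟩, Or.inl h12⟩
      · exact ⟨⟨hneg _ (hθΦ j), Submodule.neg_mem _ he2P⟩,
          Or.inl (by rw [inner_neg_right, h12, neg_zero])⟩
  have hAxcard : Ax.card = 4 := by
    rw [hAx]
    rw [Finset.card_insert_of_notMem (by simp [hne1, hneij, hneij']),
      Finset.card_insert_of_notMem (by simp [hneij'', hneij''']),
      Finset.card_insert_of_notMem (by simp [hne2]), Finset.card_singleton]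
  -- partition of FT
  have hsplit : FT.card = Ax.card + (Qpp.card + (Qpm.card + (Qmp.card + Qmm.card))) := by
    have e : FT = Ax ∪ (Qpp ∪ (Qpm ∪ (Qmp ∪ Qmm))) := by
      ext β
      simp only [hAxdef, hQppdef, hQpmdef, hQmpdef, hQmmdef, Finset.mem_union,
        Finset.mem_filter]
      constructor
      · intro hβ
        rcases lt_trichotomy (⟪θ i, β⟫_ℝ) 0 with ha | ha | ha
        · rcases lt_trichotomy (⟪θ j, β⟫_ℝ) 0 with hb | hb | hb
          · exact Or.inr (Or.inr (Or.inr (Or.inr ⟨hβ, ha, hb⟩)))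
          · exact Or.inl ⟨hβ, Or.inr hb⟩
          · exact Or.inr (Or.inr (Or.inr (Or.inl ⟨hβ, ha, hb⟩)))
        · exact Or.inl ⟨hβ, Or.inl ha⟩
        · rcases lt_trichotomy (⟪θ j, β⟫_ℝ) 0 with hb | hb | hb
          · exact Or.inr (Or.inr (Or.inl ⟨hβ, ha, hb⟩))
          · exact Or.inl ⟨hβ, Or.inr hb⟩
          · exact Or.inr (Or.inl ⟨hβ, ha, hb⟩)
      · rintro (h | h | h | h | h) <;> exact h.1
    have d4 : Disjoint Qmp Qmm := by
      rw [Finset.disjoint_left]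
      intro x hx hx'
      rw [hQmpdef, Finset.mem_filter] at hx
      rw [hQmmdef, Finset.mem_filter] at hx'
      linarith [hx.2.2, hx'.2.2]
    have d3 : Disjoint Qpm (Qmp ∪ Qmm) := by
      rw [Finset.disjoint_left]
      intro x hx hx'
      rw [hQpmdef, Finset.mem_filter] at hx
      rw [Finset.mem_union, hQmpdef, hQmmdef, Finset.mem_filter, Finset.mem_filter] at hx'
      rcases hx' with h' | h' <;> linarith [hx.2.1, h'.2.1]
    have d2 : Disjoint Qpp (Qpm ∪ (Qmp ∪ Qmm)) := by
      rw [Finset.disjoint_left]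
      intro x hx hx'
      rw [hQppdef, Finset.mem_filter] at hx
      rw [Finset.mem_union, Finset.mem_union, hQpmdef, hQmpdef, hQmmdef,
        Finset.mem_filter, Finset.mem_filter, Finset.mem_filter] at hx'
      rcases hx' with h' | h' | h' <;> linarith [hx.2.1, hx.2.2, h'.2.1, h'.2.2]
    have d1 : Disjoint Ax (Qpp ∪ (Qpm ∪ (Qmp ∪ Qmm))) := by
      rw [Finset.disjoint_left]
      intro x hx hx'
      rw [hAxdef, Finset.mem_filter] at hx
      rw [Finset.mem_union, Finset.mem_union, Finset.mem_union, hQppdef, hQpmdef,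
        hQmpdef, hQmmdef, Finset.mem_filter, Finset.mem_filter, Finset.mem_filter,
        Finset.mem_filter] at hx'
      rcases hx.2 with h | h <;> rcases hx' with h' | h' | h' | h' <;>
        linarith [h'.2.1, h'.2.2]
    rw [e, Finset.card_union_of_disjoint d1, Finset.card_union_of_disjoint d2,
      Finset.card_union_of_disjoint d3, Finset.card_union_of_disjoint d4]
  have hFTcard : FT.card = 4 + 4 * q := by
    rw [hsplit, hAxcard, hqdef]
    omega
  -- the lexicographic intersection set
  have hSeq : PhiPlusSeq Φ θ ∩ (-(PhiPlusSeq Φ (θ ∘ Equiv.swap i j))) =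
      {β | β ∈ Φ ∧ (∀ k, k < i → ⟪θ k, β⟫_ℝ = 0) ∧
        0 < ⟪θ i, β⟫_ℝ ∧ ⟪θ j, β⟫_ℝ < 0} := by
    ext β
    simp only [Set.mem_inter_iff, Set.mem_neg, PhiPlusSeq, Set.mem_setOf_eq, lexPos,
      Function.comp_apply, inner_neg_right]
    constructor
    · rintro ⟨⟨hβΦ, k, hk, hk0⟩, hβΦ', k', hk', hk'0⟩
      have c1 : ¬ Equiv.swap i j k' < k := by
        intro h
        rw [hk0 _ h] at hk'
        norm_num at hk'
      have c2 : Equiv.swap i j k' ≠ k := by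
        intro h
        rw [h] at hk'
        linarith
      have hks : k < Equiv.swap i j k' := lt_of_le_of_ne (not_lt.1 c1) (Ne.symm c2)
      have hk's : k' ≤ Equiv.swap i j k := by
        by_contra h
        push_neg at h
        have := hk'0 _ h
        rw [Equiv.swap_apply_self] at this
        rw [neg_eq_zero] at this
        linarith
      have hki : k = i := by
        by_contra hki
        by_cases hkj : k = j
        · rw [hkj, Equiv.swap_apply_right] at hk's
          by_cases h1 : k' = i
          · rw [h1, Equiv.swap_apply_left] at hks
            rw [hkj] at hks
            exact absurd hks (lt_irrefl _)
          · by_cases h2 : k' = j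
            · rw [h2] at hk's
              rw [Fin.le_def] at hk's
              omega
            · rw [Equiv.swap_apply_of_ne_of_ne h1 h2] at hks
              rw [hkj] at hks
              rw [Fin.le_def] at hk's
              rw [Fin.lt_def] at hks
              omega
        · rw [Equiv.swap_apply_of_ne_of_ne hki hkj] at hk's
          by_cases h1 : k' = i
          · rw [h1, Equiv.swap_apply_left] at hks
            rw [h1] at hk's
            rw [Fin.le_def] at hk's
            rw [Fin.lt_def] at hks
            have : (k : ℕ) = i ∨ (k : ℕ) = j := by omega
            rcases this with h | h
            · exact hki (Fin.ext h)
            · exact hkj (Fin.ext h)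
          · by_cases h2 : k' = j
            · rw [h2, Equiv.swap_apply_right] at hks
              rw [h2] at hk's
              rw [Fin.le_def] at hk's
              rw [Fin.lt_def] at hks
              omega
            · rw [Equiv.swap_apply_of_ne_of_ne h1 h2] at hks
              exact absurd hks (not_lt.2 hk's)
      rw [hki] at hk hk0
      rw [hki, Equiv.swap_apply_left] at hk's
      have hk'i : k' = i := by
        by_cases h1 : k' = i
        · exact h1
        · exfalso
          by_cases h2 : k' = j
          · rw [h2, Equiv.swap_apply_right] at hks
            rw [hki] at hks
            exact absurd hks (lt_irrefl _)
          · rw [Equiv.swap_apply_of_ne_of_ne h1 h2] at hks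
            rw [hki] at hks
            rw [Fin.le_def] at hk's
            rw [Fin.lt_def] at hks
            have : (k' : ℕ) = j := by omega
            exact h2 (Fin.ext this)
      refine ⟨hβΦ, fun l hl => hk0 l hl, hk, ?_⟩
      rw [hk'i, Equiv.swap_apply_left] at hk'
      linarith
    · rintro ⟨hβΦ, h0, hi, hj⟩
      refine ⟨⟨hβΦ, i, hi, fun l hl => h0 l hl⟩, hneg β hβΦ, i, ?_, ?_⟩
      · rw [Equiv.swap_apply_left]
        linarith
      · intro l hl
        have hli : l ≠ i := ne_of_lt hl
        have hlj : l ≠ j := by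
          intro h
          rw [h, Fin.lt_def] at hl
          omega
        rw [Equiv.swap_apply_of_ne_of_ne hli hlj, h0 l hl, neg_zero]
  have hWfin : ({β | β ∈ Φ ∧ (∀ k, k < i → ⟪θ k, β⟫_ℝ = 0) ∧
      0 < ⟪θ i, β⟫_ℝ ∧ ⟪θ j, β⟫_ℝ < 0} : Set V).Finite :=
    hfin.subset (fun β h => h.1)
  set FS := hWfin.toFinset with hFSdef
  have hFS : ∀ β, β ∈ FS ↔ β ∈ Φ ∧ (∀ k, k < i → ⟪θ k, β⟫_ℝ = 0) ∧
      0 < ⟪θ i, β⟫_ℝ ∧ ⟪θ j, β⟫_ℝ < 0 := by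
    intro β
    rw [hFSdef, Set.Finite.mem_toFinset]
    exact Iff.rfl
  -- the involution on FS
  set f : V → V := fun β => (2 * ⟪θ i, β⟫_ℝ) • θ i + (2 * ⟪θ j, β⟫_ℝ) • θ j - β
    with hfdef
  have hfa : ∀ β, ⟪θ i, f β⟫_ℝ = ⟪θ i, β⟫_ℝ := by
    intro β
    simp only [hfdef, inner_sub_right, inner_add_right, real_inner_smul_right, h11, h12]
    ring
  have hfb : ∀ β, ⟪θ j, f β⟫_ℝ = ⟪θ j, β⟫_ℝ := by
    intro β
    simp only [hfdef, inner_sub_right, inner_add_right, real_inner_smul_right, h21, h22]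
    ring
  have hfΦ : ∀ β ∈ Φ, f β ∈ Φ := by
    intro β hβ
    have h1 : -β ∈ Φ := hneg β hβ
    have h2 := hrefl (θ j) (hθΦ j) _ h1
    have h3 := hrefl (θ i) (hθΦ i) _ h2
    have hid : f β = -β - (2 * ⟪θ j, -β⟫_ℝ) • θ j -
        (2 * ⟪θ i, -β - (2 * ⟪θ j, -β⟫_ℝ) • θ j⟫_ℝ) • θ i := by
      simp only [hfdef, inner_neg_right, inner_sub_right, real_inner_smul_right, h12]
      module
    rwa [← hid] at h3
  have hfinv : ∀ β, f (f β) = β := by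
    intro β
    have ha := hfa β
    have hb := hfb β
    simp only [hfdef] at ha hb ⊢
    rw [ha, hb]
    module
  have hffix : ∀ β, f β = β ↔ β ∈ P := by
    intro β
    constructor
    · intro h
      simp only [hfdef] at h
      have h3 : (2 : ℝ) • β = (2 : ℝ) • (⟪θ i, β⟫_ℝ • θ i + ⟪θ j, β⟫_ℝ • θ j) := by
        have h2 : ((2 * ⟪θ i, β⟫_ℝ) • θ i + (2 * ⟪θ j, β⟫_ℝ) • θ j - β) + β = β + β := by
          rw [h]
        calc (2 : ℝ) • β = β + β := two_smul ℝ β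
          _ = ((2 * ⟪θ i, β⟫_ℝ) • θ i + (2 * ⟪θ j, β⟫_ℝ) • θ j - β) + β := h2.symm
          _ = (2 : ℝ) • (⟪θ i, β⟫_ℝ • θ i + ⟪θ j, β⟫_ℝ • θ j) := by module
      have h4 := smul_right_injective V (two_ne_zero) h3
      rw [h4]
      exact Submodule.add_mem _ (Submodule.smul_mem _ _ he1P) (Submodule.smul_mem _ _ he2P)
    · intro hβ
      obtain ⟨c, d, rfl⟩ := Submodule.mem_span_pair.1 hβ
      simp only [hfdef, inner_add_right, real_inner_smul_right, h11, h12, h21, h22]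
      module
  have hfFS : ∀ β ∈ FS, f β ∈ FS := by
    intro β hβ
    rw [hFS] at hβ ⊢
    refine ⟨hfΦ β hβ.1, ?_, by rw [hfa]; exact hβ.2.2.1, by rw [hfb]; exact hβ.2.2.2⟩
    intro k hk
    have hki : k ≠ i := ne_of_lt hk
    have hkj : k ≠ j := by
      intro h
      rw [h, Fin.lt_def] at hk
      omega
    simp only [hfdef, inner_sub_right, inner_add_right, real_inner_smul_right,
      horth k i hki, horth k j hkj, hβ.2.1 k hk]
    ring
  have hfixQpm : FS.filter (fun β => f β = β) = Qpm := by
    ext β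
    rw [Finset.mem_filter, hFS, hQpmdef, Finset.mem_filter, hFT]
    constructor
    · rintro ⟨⟨hβΦ, h0, ha, hb⟩, hfix⟩
      exact ⟨⟨hβΦ, (hffix β).1 hfix⟩, ha, hb⟩
    · rintro ⟨⟨hβΦ, hβP⟩, ha, hb⟩
      refine ⟨⟨hβΦ, ?_, ha, hb⟩, (hffix β).2 hβP⟩
      intro k hk
      have hki : k ≠ i := ne_of_lt hk
      have hkj : k ≠ j := by
        intro h
        rw [h, Fin.lt_def] at hk
        omega
      exact hperp k hki hkj β hβP
  have hSmod : FS.card % 2 = q % 2 := by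
    rw [card_mod_two_eq_card_filter_fixed f FS hfFS (fun β _ => hfinv β), hfixQpm, hqdef]
  -- conclusion
  refine ⟨2 * q + 2, ⟨q + 1, by ring⟩, by omega, ?_, ?_⟩
  · rw [Set.ncard_eq_toFinset_card _ hT]
    rw [← hFTdef, hFTcard]
    ring
  · rw [hSeq, Set.ncard_eq_toFinset_card _ hWfin, ← hFSdef]
    rw [hSmod]
    omega
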